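/- There exists exactly one norm ‖·‖ on c₀₀ satisfying the implicit equation ‖x‖ = max(‖x‖_{ℓ∞}, sup{ (1/f(n)) Σ_{i=1}^n ‖E_i(x)‖ : n ≥ 2, E₁ < E₂ < ⋯ < E_n finite subsets of ℕ }) for all x ∈ c₀₀. -/

import Mathlib

abbrev c00 : Type := ℕ →₀ ℝ

noncomputable def flog (x : ℝ) : ℝ := Real.logb 2 (x + 1)

noncomputable def supNorm (x : c00) : ℝ := ⨆ i, |x i|

def proj (E : Finset ℕ) (x : c00) : c00 := x.filter (· ∈ E)

def FLt (A B : Finset ℕ) : Prop := ∀ a ∈ A, ∀ b ∈ B, a < b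

def IsNormC00 (N : c00 → ℝ) : Prop :=
  (∀ x, N x = 0 ↔ x = 0) ∧ (∀ x y, N (x + y) ≤ N x + N y) ∧
    ∀ (a : ℝ) (x : c00), N (a • x) = |a| * N x

def schSet (N : c00 → ℝ) (x : c00) : Set ℝ :=
  {s | ∃ n : ℕ, 2 ≤ n ∧ ∃ E : Fin n → Finset ℕ,
    (∀ i j : Fin n, i < j → FLt (E i) (E j)) ∧
    s = (flog n)⁻¹ * ∑ i, N (proj (E i) x)}

def IsSchlumprechtNorm (N : c00 → ℝ) : Prop :=
  IsNormC00 N ∧ ∀ x : c00, IsLUB (insert (supNorm x) (schSet N x)) (N x)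

def IsBlockSeq (x : ℕ → c00) : Prop :=
  (∀ n, x n ≠ 0) ∧ ∀ n, ∀ i ∈ (x n).support, ∀ j ∈ (x (n+1)).support, i < j

def SeqEquiv (N : c00 → ℝ) (u v : ℕ → c00) : Prop :=
  ∃ c : ℝ, 1 ≤ c ∧ ∀ a : ℕ →₀ ℝ,
    (1 / c) * N (a.sum fun i t => t • u i) ≤ N (a.sum fun i t => t • v i) ∧
    N (a.sum fun i t => t • v i) ≤ c * N (a.sum fun i t => t • u i)

noncomputable def l1 (x : c00) : ℝ := ∑ i ∈ x.support, |x i|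

lemma l1_nonneg (x : c00) : 0 ≤ l1 x :=
  Finset.sum_nonneg fun _ _ => abs_nonneg _

lemma abs_le_l1 (x : c00) (i : ℕ) : |x i| ≤ l1 x := by
  by_cases h : i ∈ x.support
  · exact Finset.single_le_sum (fun j _ => abs_nonneg (x j)) h
  · rw [Finsupp.notMem_support_iff.1 h, abs_zero]; exact l1_nonneg x

lemma l1_zero : l1 0 = 0 := by simp [l1]

lemma bddA (x : c00) : BddAbove (Set.range fun i => |x i|) :=
  ⟨l1 x, by rintro r ⟨i, rfl⟩; exact abs_le_l1 x i⟩

lemma abs_le_supNorm (x : c00) (i : ℕ) : |x i| ≤ supNorm x :=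
  le_ciSup (bddA x) i

lemma supNorm_nonneg (x : c00) : 0 ≤ supNorm x :=
  le_trans (abs_nonneg (x 0)) (abs_le_supNorm x 0)

lemma supNorm_le_l1 (x : c00) : supNorm x ≤ l1 x :=
  ciSup_le fun i => abs_le_l1 x i

lemma supNorm_zero : supNorm 0 = 0 := by
  simp [supNorm, ciSup_const]

lemma supNorm_pos {x : c00} (hx : x ≠ 0) : 0 < supNorm x := by
  obtain ⟨i, hi⟩ := Finsupp.support_nonempty_iff.2 hx
  exact lt_of_lt_of_le (abs_pos.2 (Finsupp.mem_support_iff.1 hi)) (abs_le_supNorm x i)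

lemma supNorm_add_le (x y : c00) : supNorm (x + y) ≤ supNorm x + supNorm y :=
  ciSup_le fun i => by
    rw [Finsupp.add_apply]
    exact (abs_add_le _ _).trans (add_le_add (abs_le_supNorm x i) (abs_le_supNorm y i))

lemma supNorm_smul (a : ℝ) (x : c00) : supNorm (a • x) = |a| * supNorm x := by
  rw [supNorm, supNorm, Real.mul_iSup_of_nonneg (abs_nonneg a)]
  congr 1; funext i
  rw [Finsupp.smul_apply, smul_eq_mul, abs_mul]

lemma one_lt_flog_two : 1 < flog 2 := by
  have h : Real.logb 2 2 < Real.logb 2 3 :=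
    Real.logb_lt_logb one_lt_two two_pos (by norm_num)
  rw [Real.logb_self_eq_one one_lt_two] at h
  simpa [flog, show (2:ℝ)+1 = 3 by norm_num] using h

lemma flog_two_le_flog {n : ℕ} (hn : 2 ≤ n) : flog 2 ≤ flog n := by
  have : ((2:ℝ)) ≤ (n : ℝ) := by exact_mod_cast hn
  exact Real.logb_le_logb_of_le one_lt_two (by norm_num) (by linarith)

lemma one_lt_flog {n : ℕ} (hn : 2 ≤ n) : 1 < flog n :=
  lt_of_lt_of_le one_lt_flog_two (flog_two_le_flog hn)

lemma flog_inv_nonneg {n : ℕ} (hn : 2 ≤ n) : 0 ≤ (flog n)⁻¹ :=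
  inv_nonneg.2 (le_of_lt (lt_trans one_pos (one_lt_flog hn)))

lemma flog_inv_le_one {n : ℕ} (hn : 2 ≤ n) : (flog n)⁻¹ ≤ 1 :=
  inv_le_one_of_one_le₀ (le_of_lt (one_lt_flog hn))

lemma flog_inv_le_flog_two_inv {n : ℕ} (hn : 2 ≤ n) : (flog n)⁻¹ ≤ (flog 2)⁻¹ :=
  inv_anti₀ (lt_trans one_pos one_lt_flog_two) (flog_two_le_flog hn)

lemma flog_two_inv_lt_one : (flog 2)⁻¹ < 1 :=
  inv_lt_one_of_one_lt₀ one_lt_flog_two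

-- proj lemmas
lemma proj_apply (E : Finset ℕ) (x : c00) (i : ℕ) :
    proj E x i = if i ∈ E then x i else 0 := rfl

lemma proj_zero (E : Finset ℕ) : proj E 0 = 0 := by
  ext i; rw [proj_apply]; simp

lemma proj_add (E : Finset ℕ) (x y : c00) : proj E (x + y) = proj E x + proj E y := by
  ext i; rw [Finsupp.add_apply, proj_apply, proj_apply, proj_apply]
  split <;> simp

lemma proj_smul (E : Finset ℕ) (a : ℝ) (x : c00) : proj E (a • x) = a • proj E x := by
  ext i; rw [Finsupp.smul_apply, proj_apply, proj_apply, Finsupp.smul_apply]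
  split <;> simp

lemma support_proj (E : Finset ℕ) (x : c00) :
    (proj E x).support = x.support.filter (· ∈ E) := rfl

lemma proj_eq_self {E : Finset ℕ} {x : c00} (h : x.support ⊆ E) : proj E x = x := by
  ext i; rw [proj_apply]
  split
  case isTrue hi => rfl
  case isFalse hi =>
    by_cases hs : i ∈ x.support
    · exact absurd (h hs) hi
    · exact (Finsupp.notMem_support_iff.1 hs).symm

lemma proj_eq_zero {E : Finset ℕ} {x : c00} (h : ∀ i ∈ x.support, i ∉ E) : proj E x = 0 := by
  ext i; rw [proj_apply]
  split
  case isTrue hi =>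
    by_cases hs : i ∈ x.support
    · exact absurd hi (h i hs)
    · simpa using Finsupp.notMem_support_iff.1 hs
  case isFalse hi => simp

-- chains
lemma chain_disjoint {n : ℕ} {E : Fin n → Finset ℕ}
    (hch : ∀ i j : Fin n, i < j → FLt (E i) (E j)) {i j : Fin n} (hij : i ≠ j)
    {a : ℕ} (hai : a ∈ E i) (haj : a ∈ E j) : False := by
  rcases hij.lt_or_gt with h | h
  · exact lt_irrefl a (hch i j h a hai a haj)
  · exact lt_irrefl a (hch j i h a haj a hai)

lemma sum_l1_proj_le {n : ℕ} {E : Fin n → Finset ℕ}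
    (hch : ∀ i j : Fin n, i < j → FLt (E i) (E j)) (x : c00) :
    ∑ i, l1 (proj (E i) x) ≤ l1 x := by
  have hl1 : ∀ i : Fin n, l1 (proj (E i) x) = ∑ j ∈ x.support.filter (· ∈ E i), |x j| := by
    intro i
    rw [l1, support_proj]
    refine Finset.sum_congr rfl fun j hj => ?_
    rw [proj_apply, if_pos (Finset.mem_filter.1 hj).2]
  simp_rw [hl1]
  rw [← Finset.sum_biUnion]
  · refine Finset.sum_le_sum_of_subset_of_nonneg ?_ (fun j _ _ => abs_nonneg (x j))
    intro j hj
    exact (Finset.mem_filter.1 (Finset.mem_biUnion.1 hj).choose_spec.2).1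
  · intro i _ j _ hij
    rw [Function.onFun, Finset.disjoint_left]
    intro a ha hb
    exact chain_disjoint hch hij (Finset.mem_filter.1 ha).2 (Finset.mem_filter.1 hb).2

-- the sets and the iteration
lemma schSet_elem_le {N : c00 → ℝ} (hN : ∀ y, N y ≤ l1 y) {x : c00} {s : ℝ}
    (hs : s ∈ schSet N x) : s ≤ l1 x := by
  obtain ⟨n, hn, E, hch, rfl⟩ := hs
  have h1 : ∑ i, N (proj (E i) x) ≤ ∑ i, l1 (proj (E i) x) :=
    Finset.sum_le_sum fun i _ => hN _
  have h2 : ∑ i, N (proj (E i) x) ≤ l1 x := h1.trans (sum_l1_proj_le hch x)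
  calc (flog n)⁻¹ * ∑ i, N (proj (E i) x)
      ≤ (flog n)⁻¹ * l1 x := mul_le_mul_of_nonneg_left h2 (flog_inv_nonneg hn)
    _ ≤ 1 * l1 x := mul_le_mul_of_nonneg_right (flog_inv_le_one hn) (l1_nonneg x)
    _ = l1 x := one_mul _

noncomputable def Phi (N : c00 → ℝ) (x : c00) : ℝ :=
  sSup (insert (supNorm x) (schSet N x))

def Good (N : c00 → ℝ) : Prop :=
  (∀ x, supNorm x ≤ N x) ∧ (∀ x, N x ≤ l1 x) ∧ (∀ x y, N (x + y) ≤ N x + N y) ∧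
    ∀ (a : ℝ) (x : c00), N (a • x) = |a| * N x

lemma good_zero {N : c00 → ℝ} (h : Good N) : N 0 = 0 :=
  le_antisymm (by simpa [l1_zero] using h.2.1 0) (by simpa [supNorm_zero] using h.1 0)

lemma SS_nonempty (N : c00 → ℝ) (x : c00) :
    (insert (supNorm x) (schSet N x)).Nonempty := ⟨supNorm x, Set.mem_insert _ _⟩

lemma SS_le {N : c00 → ℝ} (hN : ∀ y, N y ≤ l1 y) (x : c00) :
    ∀ s ∈ insert (supNorm x) (schSet N x), s ≤ l1 x := by
  rintro s (rfl | hs)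
  · exact supNorm_le_l1 x
  · exact schSet_elem_le hN hs

lemma SS_bdd {N : c00 → ℝ} (hN : ∀ y, N y ≤ l1 y) (x : c00) :
    BddAbove (insert (supNorm x) (schSet N x)) :=
  ⟨l1 x, fun s hs => SS_le hN x s hs⟩

lemma supNorm_le_Phi {N : c00 → ℝ} (hN : ∀ y, N y ≤ l1 y) (x : c00) :
    supNorm x ≤ Phi N x :=
  le_csSup (SS_bdd hN x) (Set.mem_insert _ _)

lemma Phi_le_l1 {N : c00 → ℝ} (hN : ∀ y, N y ≤ l1 y) (x : c00) : Phi N x ≤ l1 x :=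
  csSup_le (SS_nonempty N x) (SS_le hN x)

lemma schSet_le_Phi {N : c00 → ℝ} (hN : ∀ y, N y ≤ l1 y) {x : c00} {s : ℝ}
    (hs : s ∈ schSet N x) : s ≤ Phi N x :=
  le_csSup (SS_bdd hN x) (Set.mem_insert_of_mem _ hs)

open Pointwise in
lemma good_Phi {N : c00 → ℝ} (h : Good N) : Good (Phi N) := by
  obtain ⟨h1, h2, h3, h4⟩ := h
  refine ⟨supNorm_le_Phi h2, Phi_le_l1 h2, ?_, ?_⟩
  · -- triangle inequality
    intro x y
    refine csSup_le (SS_nonempty N _) ?_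
    rintro s (rfl | hs)
    · exact (supNorm_add_le x y).trans
        (add_le_add (supNorm_le_Phi h2 x) (supNorm_le_Phi h2 y))
    · obtain ⟨n, hn, E, hch, rfl⟩ := hs
      have key : ∑ i, N (proj (E i) (x + y)) ≤
          (∑ i, N (proj (E i) x)) + ∑ i, N (proj (E i) y) := by
        rw [← Finset.sum_add_distrib]
        refine Finset.sum_le_sum fun i _ => ?_
        rw [proj_add]; exact h3 _ _
      calc (flog n)⁻¹ * ∑ i, N (proj (E i) (x + y))
          ≤ (flog n)⁻¹ * ((∑ i, N (proj (E i) x)) + ∑ i, N (proj (E i) y)) :=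
            mul_le_mul_of_nonneg_left key (flog_inv_nonneg hn)
        _ = (flog n)⁻¹ * (∑ i, N (proj (E i) x)) +
            (flog n)⁻¹ * ∑ i, N (proj (E i) y) := mul_add _ _ _
        _ ≤ Phi N x + Phi N y :=
            add_le_add (schSet_le_Phi h2 ⟨n, hn, E, hch, rfl⟩)
              (schSet_le_Phi h2 ⟨n, hn, E, hch, rfl⟩)
  · -- homogeneity
    intro a x
    have hset : insert (supNorm (a • x)) (schSet N (a • x)) =
        |a| • insert (supNorm x) (schSet N x) := by
      ext s
      simp only [Set.mem_insert_iff, Set.mem_smul_set, smul_eq_mul]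
      constructor
      · rintro (rfl | ⟨n, hn, E, hch, rfl⟩)
        · exact ⟨supNorm x, Or.inl rfl, (supNorm_smul a x).symm⟩
        · refine ⟨(flog n)⁻¹ * ∑ i, N (proj (E i) x), Or.inr ⟨n, hn, E, hch, rfl⟩, ?_⟩
          simp_rw [proj_smul, h4]
          rw [← Finset.mul_sum]; ring
      · rintro ⟨t, (rfl | ⟨n, hn, E, hch, rfl⟩), rfl⟩
        · exact Or.inl (supNorm_smul a x).symm
        · refine Or.inr ⟨n, hn, E, hch, ?_⟩
          simp_rw [proj_smul, h4]
          rw [← Finset.mul_sum]; ring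
    rw [Phi, hset, Real.sSup_smul_of_nonneg (abs_nonneg a), smul_eq_mul, Phi]

lemma Phi_mono {N₁ N₂ : c00 → ℝ} (h12 : ∀ y, N₁ y ≤ N₂ y) (h2 : ∀ y, N₂ y ≤ l1 y)
    (x : c00) : Phi N₁ x ≤ Phi N₂ x := by
  refine csSup_le (SS_nonempty N₁ x) ?_
  rintro s (rfl | hs)
  · exact supNorm_le_Phi h2 x
  · obtain ⟨n, hn, E, hch, rfl⟩ := hs
    calc (flog n)⁻¹ * ∑ i, N₁ (proj (E i) x)
        ≤ (flog n)⁻¹ * ∑ i, N₂ (proj (E i) x) :=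
          mul_le_mul_of_nonneg_left (Finset.sum_le_sum fun i _ => h12 _)
            (flog_inv_nonneg hn)
      _ ≤ Phi N₂ x := schSet_le_Phi h2 ⟨n, hn, E, hch, rfl⟩

noncomputable def Nk : ℕ → c00 → ℝ
  | 0 => supNorm
  | k + 1 => Phi (Nk k)

lemma good_supNorm : Good supNorm :=
  ⟨fun _ => le_rfl, supNorm_le_l1, supNorm_add_le, supNorm_smul⟩

lemma good_Nk : ∀ k, Good (Nk k)
  | 0 => good_supNorm
  | k + 1 => good_Phi (good_Nk k)

lemma Nk_mono_succ (k : ℕ) (x : c00) : Nk k x ≤ Nk (k + 1) x := by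
  induction k generalizing x with
  | zero => exact supNorm_le_Phi (good_supNorm.2.1) x
  | succ k ih => exact Phi_mono ih (good_Nk (k + 1)).2.1 x

lemma Nk_mono (x : c00) : Monotone fun k => Nk k x :=
  monotone_nat_of_le_succ fun k => Nk_mono_succ k x

noncomputable def Nlim (x : c00) : ℝ := ⨆ k, Nk k x

lemma Nk_bdd (x : c00) : BddAbove (Set.range fun k => Nk k x) :=
  ⟨l1 x, by rintro r ⟨k, rfl⟩; exact (good_Nk k).2.1 x⟩

lemma Nk_le_Nlim (k : ℕ) (x : c00) : Nk k x ≤ Nlim x :=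
  le_ciSup (Nk_bdd x) k

lemma supNorm_le_Nlim (x : c00) : supNorm x ≤ Nlim x := Nk_le_Nlim 0 x

lemma Nlim_le_l1 (x : c00) : Nlim x ≤ l1 x :=
  ciSup_le fun k => (good_Nk k).2.1 x

lemma Nlim_nonneg (x : c00) : 0 ≤ Nlim x :=
  (supNorm_nonneg x).trans (supNorm_le_Nlim x)

lemma Nlim_zero : Nlim 0 = 0 :=
  le_antisymm (by simpa [l1_zero] using Nlim_le_l1 0) (Nlim_nonneg 0)

lemma Nlim_add (x y : c00) : Nlim (x + y) ≤ Nlim x + Nlim y :=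
  ciSup_le fun k => ((good_Nk k).2.2.1 x y).trans
    (add_le_add (Nk_le_Nlim k x) (Nk_le_Nlim k y))

lemma Nlim_smul (a : ℝ) (x : c00) : Nlim (a • x) = |a| * Nlim x := by
  rw [Nlim, Nlim, Real.mul_iSup_of_nonneg (abs_nonneg a)]
  congr 1; funext k; exact (good_Nk k).2.2.2 a x

lemma sup_add_sup {u v : ℕ → ℝ} (hu : Monotone u) (hv : Monotone v)
    (bu : BddAbove (Set.range u)) (bv : BddAbove (Set.range v)) :
    (⨆ k, u k) + (⨆ k, v k) = ⨆ k, (u k + v k) := by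
  have bs : BddAbove (Set.range fun k => u k + v k) := by
    obtain ⟨B, hB⟩ := bu; obtain ⟨C, hC⟩ := bv
    refine ⟨B + C, ?_⟩
    rintro r ⟨k, rfl⟩
    exact add_le_add (hB ⟨k, rfl⟩) (hC ⟨k, rfl⟩)
  refine le_antisymm ?_ (ciSup_le fun k => add_le_add (le_ciSup bu k) (le_ciSup bv k))
  have h : ∀ k m, u k + v m ≤ ⨆ j, (u j + v j) := fun k m =>
    le_trans (add_le_add (hu (le_max_left k m)) (hv (le_max_right k m)))
      (le_ciSup bs (max k m))
  have h2 : ∀ k, u k + (⨆ m, v m) ≤ ⨆ j, (u j + v j) := by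
    intro k
    have : (⨆ m, v m) ≤ (⨆ j, (u j + v j)) - u k :=
      ciSup_le fun m => by linarith [h k m]
    linarith
  have h3 : (⨆ k, u k) ≤ (⨆ j, (u j + v j)) - ⨆ m, v m :=
    ciSup_le fun k => by linarith [h2 k]
  linarith

lemma sum_iSup_eq {ι : Type*} (s : Finset ι) (f : ι → ℕ → ℝ) (hm : ∀ i, Monotone (f i))
    (hb : ∀ i, BddAbove (Set.range (f i))) :
    ∑ i ∈ s, (⨆ k, f i k) = ⨆ k, ∑ i ∈ s, f i k := by
  classical
  induction s using Finset.induction with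
  | empty => simp [ciSup_const]
  | insert a s ha ih =>
      have hmono : Monotone fun k => ∑ i ∈ s, f i k :=
        fun k m hkm => Finset.sum_le_sum fun i _ => hm i hkm
      have hbdd : BddAbove (Set.range fun k => ∑ i ∈ s, f i k) := by
        refine ⟨∑ i ∈ s, ⨆ k, f i k, ?_⟩
        rintro r ⟨k, rfl⟩
        exact Finset.sum_le_sum fun i _ => le_ciSup (hb i) k
      rw [Finset.sum_insert ha, ih]
      rw [sup_add_sup (hm a) hmono (hb a) hbdd]
      congr 1; funext k; rw [Finset.sum_insert ha]

theorem Nlim_isLUB (x : c00) :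
    IsLUB (insert (supNorm x) (schSet Nlim x)) (Nlim x) := by
  constructor
  · -- upper bound
    rintro s (rfl | hs)
    · exact supNorm_le_Nlim x
    · obtain ⟨n, hn, E, hch, rfl⟩ := hs
      have hexch : ∑ i, Nlim (proj (E i) x) = ⨆ k, ∑ i, Nk k (proj (E i) x) :=
        sum_iSup_eq Finset.univ (fun i k => Nk k (proj (E i) x))
          (fun i => Nk_mono _) (fun i => Nk_bdd _)
      rw [hexch, Real.mul_iSup_of_nonneg (flog_inv_nonneg hn)]
      refine ciSup_le fun k => ?_
      have h1 : (flog n)⁻¹ * ∑ i, Nk k (proj (E i) x) ≤ Nk (k + 1) x :=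
        schSet_le_Phi (good_Nk k).2.1 ⟨n, hn, E, hch, rfl⟩
      exact h1.trans (Nk_le_Nlim (k + 1) x)
  · -- least upper bound
    intro b hb
    refine ciSup_le fun k => ?_
    cases k with
    | zero => exact hb (Set.mem_insert _ _)
    | succ k =>
        refine csSup_le (SS_nonempty (Nk k) x) ?_
        rintro s (rfl | hs)
        · exact hb (Set.mem_insert _ _)
        · obtain ⟨n, hn, E, hch, rfl⟩ := hs
          have h1 : (flog n)⁻¹ * ∑ i, Nk k (proj (E i) x) ≤
              (flog n)⁻¹ * ∑ i, Nlim (proj (E i) x) :=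
            mul_le_mul_of_nonneg_left
              (Finset.sum_le_sum fun i _ => Nk_le_Nlim k _) (flog_inv_nonneg hn)
          exact h1.trans (hb (Set.mem_insert_of_mem _ ⟨n, hn, E, hch, rfl⟩))

theorem Nlim_isSchlumprecht : IsSchlumprechtNorm Nlim := by
  refine ⟨⟨?_, Nlim_add, Nlim_smul⟩, Nlim_isLUB⟩
  intro x
  constructor
  · intro h
    by_contra hx
    exact absurd h (ne_of_gt (lt_of_lt_of_le (supNorm_pos hx) (supNorm_le_Nlim x)))
  · rintro rfl; exact Nlim_zero

lemma sol_le {N M : c00 → ℝ} (hN : IsSchlumprechtNorm N) (hM : IsSchlumprechtNorm M)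
    (y : c00) (IH : ∀ z : c00, z.support.card < y.support.card → N z = M z) :
    N y ≤ M y := by
  by_cases h0 : y = 0
  · subst h0
    rw [(hN.1.1 0).2 rfl, (hM.1.1 0).2 rfl]
  have hNy := hN.2 y
  have hMy := hM.2 y
  have hN0 : N 0 = 0 := (hN.1.1 0).2 rfl
  have hNypos : 0 < N y :=
    lt_of_lt_of_le (supNorm_pos h0) (hNy.1 (Set.mem_insert _ _))
  have hub : max (M y) ((flog 2)⁻¹ * N y) ∈
      upperBounds (insert (supNorm y) (schSet N y)) := by
    rintro s (rfl | hs)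
    · exact le_max_of_le_left (hMy.1 (Set.mem_insert _ _))
    obtain ⟨n, hn, E, hch, rfl⟩ := hs
    by_cases hcov : ∃ i, y.support ⊆ E i
    · obtain ⟨i, hi⟩ := hcov
      have hz : ∀ j, j ≠ i → proj (E j) y = 0 := by
        intro j hj
        refine proj_eq_zero fun a ha haj => ?_
        exact chain_disjoint hch (Ne.symm hj) (hi ha) haj
      have hsum : ∑ j, N (proj (E j) y) = N y := by
        rw [Finset.sum_eq_single i (fun j _ hj => by rw [hz j hj, hN0])
          (fun h => absurd (Finset.mem_univ i) h), proj_eq_self hi]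
      rw [hsum]
      refine le_max_of_le_right ?_
      exact mul_le_mul_of_nonneg_right (flog_inv_le_flog_two_inv hn) hNypos.le
    · push_neg at hcov
      have hcard : ∀ i, (proj (E i) y).support.card < y.support.card := by
        intro i
        refine Finset.card_lt_card ?_
        rw [support_proj]
        refine Finset.filter_ssubset.2 ?_
        obtain ⟨a, ha, hna⟩ := Finset.not_subset.1 (hcov i)
        exact ⟨a, ha, hna⟩
      have hNM : ∀ i, N (proj (E i) y) = M (proj (E i) y) := fun i => IH _ (hcard i)
      simp_rw [hNM]
      exact le_max_of_le_left
        (hMy.1 (Set.mem_insert_of_mem _ ⟨n, hn, E, hch, rfl⟩))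
  have hle : N y ≤ max (M y) ((flog 2)⁻¹ * N y) := hNy.2 hub
  by_contra hlt
  push_neg at hlt
  have h2 : (flog 2)⁻¹ * N y < N y := by
    nlinarith [flog_two_inv_lt_one, hNypos]
  exact absurd hle (not_le.2 (max_lt hlt h2))

lemma sol_eq {N M : c00 → ℝ} (hN : IsSchlumprechtNorm N) (hM : IsSchlumprechtNorm M) :
    N = M := by
  funext y
  suffices H : ∀ n : ℕ, ∀ y : c00, y.support.card = n → N y = M y from H _ y rfl
  intro n
  induction n using Nat.strong_induction_on with
  | _ n IHn =>
    intro y hy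
    have IH : ∀ z : c00, z.support.card < y.support.card → N z = M z := by
      intro z hz
      exact IHn _ (hy ▸ hz) z rfl
    refine le_antisymm (sol_le hN hM y IH) (sol_le hM hN y fun z hz => (IH z hz).symm)


/-- there exists exactly one norm on `c₀₀` satisfying the
Schlumprecht implicit equation. -/
theorem schlumprecht_norm_exists_unique :
    ∃! N : c00 → ℝ, IsSchlumprechtNorm N := by
  exact ⟨Nlim, Nlim_isSchlumprecht, fun M hM => sol_eq hM Nlim_isSchlumprecht⟩
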